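/- Let r ≥ 5 be a prime, let ζ be a primitive r-th root of unity in ℚ(ζ_r), and let a, b be coprime integers. If q is a prime ideal of ℤ[ζ] different from (1−ζ), then q divides at most one of the three elements A_{a,b}, B_{a,b}, C_{a,b}; that is, the only prime ideal of ℤ[ζ] that can divide two of A_{a,b}, B_{a,b}, C_{a,b} simultaneously is the prime (1−ζ) above r. -/

import Mathlib

open NumberField

/-- `A_{a,b} = α(a+b)²` with `α = ζ(1−ζ)(1−ζ⁻³)`, where `ζ⁻¹ = ζ^{r−1}`. -/
def freyA {R : Type*} [CommRing R] (r : ℕ) (ζ : R) (a b : ℤ) : R :=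
  ζ * (1 - ζ) * (1 - ζ ^ (r - 3)) * ((a : R) + (b : R)) ^ 2

/-- `B_{a,b} = β f₁(a,b)` with `β = (1−ζ)(1−ζ⁻¹)`, `f₁(x,y) = x² + (ζ² + ζ⁻²)xy + y²`. -/
def freyB {R : Type*} [CommRing R] (r : ℕ) (ζ : R) (a b : ℤ) : R :=
  (1 - ζ) * (1 - ζ ^ (r - 1)) *
    ((a : R) ^ 2 + (ζ ^ 2 + ζ ^ (r - 2)) * (a : R) * (b : R) + (b : R) ^ 2)

/-- `C_{a,b} = γ f₂(a,b)` with `γ = −(1−ζ²)(1−ζ⁻²)`, `f₂(x,y) = x² + (ζ + ζ⁻¹)xy + y²`. -/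
def freyC {R : Type*} [CommRing R] (r : ℕ) (ζ : R) (a b : ℤ) : R :=
  -((1 - ζ ^ 2) * (1 - ζ ^ (r - 2))) *
    ((a : R) ^ 2 + (ζ + ζ ^ (r - 1)) * (a : R) * (b : R) + (b : R) ^ 2)

/-- Let `r ≥ 5` be a prime, `ζ` a primitive `r`-th root of unity in the ring of
integers `ℤ[ζ]` of `ℚ(ζ_r)`, and `a, b` coprime integers. Every prime ideal `q` of
`ℤ[ζ]` different from `(1−ζ)` divides at most one of `A_{a,b}`, `B_{a,b}`, `C_{a,b}`. -/
theorem stmt_15 (r : ℕ) (hr : r.Prime) (hr5 : 5 ≤ r)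
    (K : Type*) [Field K] [CharZero K]
    [IsCyclotomicExtension {r} ℚ K]
    (ζ : 𝓞 K) (hζ : IsPrimitiveRoot ζ r)
    (a b : ℤ) (hab : IsCoprime a b)
    (q : Ideal (𝓞 K)) (hq : q.IsPrime) (hqr : q ≠ Ideal.span {1 - ζ}) :
    ¬ (freyA r ζ a b ∈ q ∧ freyB r ζ a b ∈ q) ∧
    ¬ (freyA r ζ a b ∈ q ∧ freyC r ζ a b ∈ q) ∧
    ¬ (freyB r ζ a b ∈ q ∧ freyC r ζ a b ∈ q) := by
  have hr0 : 0 < r := by omega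
  haveI hNF : NumberField K := IsCyclotomicExtension.numberField {r} ℚ K
  -- `ζ - 1` is a prime element
  have hζK : IsPrimitiveRoot (ζ : K) ((⟨r, by omega⟩ : ℕ+) : ℕ) :=
    IsPrimitiveRoot.coe_submonoidClass_iff.mpr hζ
  have hP : Prime (ζ - 1) :=
    by haveI : Fact r.Prime := ⟨hr⟩; exact hζK.zeta_sub_one_prime' (p := r)
  have hP' : Prime (1 - ζ) := by
    have := hP.neg
    rwa [neg_sub] at this
  have hord : orderOf ζ = r := (hζ.eq_orderOf).symm
  have hζpow : ζ ^ r = 1 := hζ.pow_eq_one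
  -- ζ is a unit
  have hζu : IsUnit ζ := by
    apply IsUnit.of_mul_eq_one (ζ ^ (r - 1))
    rw [← pow_succ']
    rw [show r - 1 + 1 = r by omega, hζpow]
  have hζq : ζ ∉ q := fun h => hq.ne_top (q.eq_top_of_isUnit_mem h hζu)
  -- `1 - ζ ^ k ∉ q` for `r ∤ k`
  have hkey : ∀ k : ℕ, ¬ r ∣ k → (1 - ζ ^ k) ∉ q := by
    intro k hk hmem
    -- find m with k * m ≡ 1 [MOD r]
    have hcop : Nat.Coprime k r := (Nat.Prime.coprime_iff_not_dvd hr).mpr hk |>.symm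
    obtain ⟨m, -, hm⟩ := Nat.exists_mul_mod_eq_one_of_coprime hcop (by omega)
    have hpow : (ζ ^ k) ^ m = ζ := by
      rw [← pow_mul]
      conv_lhs => rw [← Nat.div_add_mod (k * m) r]
      rw [hm, pow_add, pow_mul, hζpow, one_pow, pow_one, one_mul]
    have hdvd : (ζ ^ k - 1) ∣ (ζ - 1) := by
      have := sub_dvd_pow_sub_pow (ζ ^ k) 1 m
      rwa [hpow, one_pow] at this
    have h1 : ζ - 1 ∈ q := by
      obtain ⟨c, hc⟩ := hdvd
      rw [hc]
      exact Ideal.mul_mem_right _ _ (by simpa using q.neg_mem hmem)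
    -- so q contains the maximal ideal (1 - ζ)
    have hmax : (Ideal.span {1 - ζ} : Ideal (𝓞 K)).IsMaximal := by
      have hprime : (Ideal.span {1 - ζ} : Ideal (𝓞 K)).IsPrime :=
        (Ideal.span_singleton_prime hP'.ne_zero).mpr hP'
      exact Ideal.IsPrime.isMaximal hprime
        (by simpa [Ideal.span_singleton_eq_bot] using hP'.ne_zero)
    have hle : Ideal.span {1 - ζ} ≤ q := by
      rw [Ideal.span_le]
      intro x hx
      simp only [Set.mem_singleton_iff] at hx
      subst hx
      simpa using q.neg_mem h1
    exact hqr (hmax.eq_of_le hq.ne_top hle).symm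
  have hndvd : ∀ k : ℕ, 0 < k → k < r → ¬ r ∣ k := by
    intro k h1 h2 h
    have := Nat.le_of_dvd h1 h
    omega
  have h1q : (1 - ζ) ∉ q := by
    have := hkey 1 (hndvd 1 one_pos (by omega))
    simpa using this
  -- both `a` and `b` in `q` is impossible
  have hcontra : (a : 𝓞 K) ∈ q → (b : 𝓞 K) ∈ q → False := by
    intro ha hb
    obtain ⟨u, v, huv⟩ := hab
    apply hq.ne_top
    rw [Ideal.eq_top_iff_one]
    have : ((u : 𝓞 K) * a + v * b) = 1 := by exact_mod_cast congrArg (Int.cast : ℤ → 𝓞 K) huv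
    rw [← this]
    exact q.add_mem (q.mul_mem_left _ ha) (q.mul_mem_left _ hb)
  -- power rewrites
  have ht2 : ζ ^ (r - 2) = ζ ^ (r - 3) * ζ := by
    rw [← pow_succ]; congr 1; omega
  have ht1 : ζ ^ (r - 1) = ζ ^ (r - 3) * ζ ^ 2 := by
    rw [← pow_add]; congr 1; omega
  have hrel : ζ ^ (r - 3) * ζ ^ 3 = 1 := by
    rw [← pow_add, show r - 3 + 3 = r by omega, hζpow]
  -- extraction lemmas
  have hA : freyA r ζ a b ∈ q → ((a : 𝓞 K) + b) ∈ q := by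
    intro h
    unfold freyA at h
    rcases hq.mem_or_mem h with h | h
    · rcases hq.mem_or_mem h with h | h
      · rcases hq.mem_or_mem h with h | h
        · exact absurd h hζq
        · exact absurd h h1q
      · exact absurd h (hkey (r - 3) (hndvd _ (by omega) (by omega)))
    · exact hq.mem_of_pow_mem 2 h
  have hB : freyB r ζ a b ∈ q →
      ((a : 𝓞 K) ^ 2 + (ζ ^ 2 + ζ ^ (r - 2)) * a * b + b ^ 2) ∈ q := by
    intro h
    unfold freyB at h
    rcases hq.mem_or_mem h with h | h
    · rcases hq.mem_or_mem h with h | h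
      · exact absurd h h1q
      · exact absurd h (hkey (r - 1) (hndvd _ (by omega) (by omega)))
    · exact h
  have hC : freyC r ζ a b ∈ q →
      ((a : 𝓞 K) ^ 2 + (ζ + ζ ^ (r - 1)) * a * b + b ^ 2) ∈ q := by
    intro h
    unfold freyC at h
    rw [neg_mul, q.neg_mem_iff] at h
    rcases hq.mem_or_mem h with h | h
    · rcases hq.mem_or_mem h with h | h
      · exact absurd h (hkey 2 (hndvd _ (by omega) (by omega)))
      · exact absurd h (hkey (r - 2) (hndvd _ (by omega) (by omega)))
    · exact h
  -- from a*b ∈ q, get a ∈ q or b ∈ q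
  have hmulsplit : (a : 𝓞 K) * b ∈ q → ((a : 𝓞 K) ∈ q ∨ (b : 𝓞 K) ∈ q) :=
    fun h => hq.mem_or_mem h
  refine ⟨?_, ?_, ?_⟩
  · rintro ⟨h1, h2⟩
    have hs : ((a : 𝓞 K) + b) ∈ q := hA h1
    have hf : ((a : 𝓞 K) ^ 2 + (ζ ^ 2 + ζ ^ (r - 2)) * a * b + b ^ 2) ∈ q := hB h2
    have hid : (1 - ζ ^ 2) * (1 - ζ ^ (r - 2)) * ((a : 𝓞 K) * b) =
        ((a : 𝓞 K) + b) ^ 2 - ((a : 𝓞 K) ^ 2 + (ζ ^ 2 + ζ ^ (r - 2)) * a * b + b ^ 2) := by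
      rw [ht2]
      linear_combination ((a : 𝓞 K) * b) * hrel
    have hab' : (a : 𝓞 K) * b ∈ q := by
      rcases hq.mem_or_mem (show (1 - ζ ^ 2) * (1 - ζ ^ (r - 2)) * ((a : 𝓞 K) * b) ∈ q from
        hid ▸ q.sub_mem (q.pow_mem_of_mem hs 2 two_pos) hf) with h | h
      · rcases hq.mem_or_mem h with h | h
        · exact absurd h (hkey 2 (hndvd _ (by omega) (by omega)))
        · exact absurd h (hkey (r - 2) (hndvd _ (by omega) (by omega)))
      · exact h
    rcases hmulsplit hab' with h | h
    · exact hcontra h (by simpa using q.sub_mem hs h)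
    · exact hcontra (by simpa using q.sub_mem hs h) h
  · rintro ⟨h1, h2⟩
    have hs : ((a : 𝓞 K) + b) ∈ q := hA h1
    have hf : ((a : 𝓞 K) ^ 2 + (ζ + ζ ^ (r - 1)) * a * b + b ^ 2) ∈ q := hC h2
    have hid : (1 - ζ) * (1 - ζ ^ (r - 1)) * ((a : 𝓞 K) * b) =
        ((a : 𝓞 K) + b) ^ 2 - ((a : 𝓞 K) ^ 2 + (ζ + ζ ^ (r - 1)) * a * b + b ^ 2) := by
      rw [ht1]
      linear_combination ((a : 𝓞 K) * b) * hrel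
    have hab' : (a : 𝓞 K) * b ∈ q := by
      rcases hq.mem_or_mem (show (1 - ζ) * (1 - ζ ^ (r - 1)) * ((a : 𝓞 K) * b) ∈ q from
        hid ▸ q.sub_mem (q.pow_mem_of_mem hs 2 two_pos) hf) with h | h
      · rcases hq.mem_or_mem h with h | h
        · exact absurd h h1q
        · exact absurd h (hkey (r - 1) (hndvd _ (by omega) (by omega)))
      · exact h
    rcases hmulsplit hab' with h | h
    · exact hcontra h (by simpa using q.sub_mem hs h)
    · exact hcontra (by simpa using q.sub_mem hs h) h
  · rintro ⟨h1, h2⟩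
    have hf1 : ((a : 𝓞 K) ^ 2 + (ζ ^ 2 + ζ ^ (r - 2)) * a * b + b ^ 2) ∈ q := hB h1
    have hf2 : ((a : 𝓞 K) ^ 2 + (ζ + ζ ^ (r - 1)) * a * b + b ^ 2) ∈ q := hC h2
    have hid : ζ ^ (r - 2) * ((1 - ζ) * (1 - ζ ^ 3)) * ((a : 𝓞 K) * b) =
        ((a : 𝓞 K) ^ 2 + (ζ ^ 2 + ζ ^ (r - 2)) * a * b + b ^ 2) -
          ((a : 𝓞 K) ^ 2 + (ζ + ζ ^ (r - 1)) * a * b + b ^ 2) := by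
      rw [ht1, ht2]
      linear_combination ((a : 𝓞 K) * b * ((ζ - 1) ^ 2 + (ζ - 1))) * hrel
    have hab' : (a : 𝓞 K) * b ∈ q := by
      rcases hq.mem_or_mem (show ζ ^ (r - 2) * ((1 - ζ) * (1 - ζ ^ 3)) * ((a : 𝓞 K) * b) ∈ q from
        hid ▸ q.sub_mem hf1 hf2) with h | h
      · rcases hq.mem_or_mem h with h | h
        · exact absurd (hq.mem_of_pow_mem _ h) hζq
        · rcases hq.mem_or_mem h with h | h
          · exact absurd h h1q
          · exact absurd h (hkey 3 (hndvd _ (by omega) (by omega)))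
      · exact h
    rcases hmulsplit hab' with h | h
    · -- a ∈ q, so b^2 ∈ q
      have hb : (b : 𝓞 K) ∈ q := by
        apply hq.mem_of_pow_mem 2
        have : ((b : 𝓞 K)) ^ 2 =
            ((a : 𝓞 K) ^ 2 + (ζ ^ 2 + ζ ^ (r - 2)) * a * b + b ^ 2)
              - (a : 𝓞 K) * ((a : 𝓞 K) + (ζ ^ 2 + ζ ^ (r - 2)) * b) := by ring
        rw [this]
        exact q.sub_mem hf1 (q.mul_mem_right _ h)
      exact hcontra h hb
    · have ha : (a : 𝓞 K) ∈ q := by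
        apply hq.mem_of_pow_mem 2
        have : ((a : 𝓞 K)) ^ 2 =
            ((a : 𝓞 K) ^ 2 + (ζ ^ 2 + ζ ^ (r - 2)) * a * b + b ^ 2)
              - (b : 𝓞 K) * ((b : 𝓞 K) + (ζ ^ 2 + ζ ^ (r - 2)) * a) := by ring
        rw [this]
        exact q.sub_mem hf1 (q.mul_mem_right _ h)
      exact hcontra ha h
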